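/- Let G = (A;E) be C²_ω, the countably infinite graph that is a disjoint union of ω edges, f : A^k → A a quasi near-unanimity operation preserving E, N and uuE, and R ⊆ A⁴ a quaternary relation preserved by f, invariant under all automorphisms of G, containing an E=-tuple t and an =E-tuple t′ with N(t[2],t[3]) and N(t′[2],t′[3]). Let m ∈ {1,…,k}. If for all {E,=}-connected pairs (u,s) of k-tuples with u constant and n_E(u,s) = m we have E(f(u),f(s)) (respectively f(u) = f(s)), then either for all {E,=}-connected pairs (u,s) with u constant and n_E(u,s) ∈ {k−m, k−m+1} we have f(u) = f(s) (respectively E(f(u),f(s))), or R contains an EE-tuple (respectively an ==-tuple). -/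

import Mathlib

universe u

variable {A : Type u}

/-- Non-adjacency relation `N` of a graph with edge relation `E`. -/
def NRel (E : A → A → Prop) (a b : A) : Prop := a ≠ b ∧ ¬ E a b

/-- `uu O` denotes `O ∪ =`. -/
def uu (O : A → A → Prop) (a b : A) : Prop := O a b ∨ a = b

/-- `E` is the edge relation of a simple graph: symmetric and irreflexive. -/
def IsSimpleGraph (E : A → A → Prop) : Prop :=
  (∀ a b, E a b → E b a) ∧ (∀ a, ¬ E a a)

/-- An `n`-ary operation preserves an `m`-ary relation. -/
def Preserves {n m : ℕ} (f : (Fin n → A) → A) (R : Set (Fin m → A)) : Prop :=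
  ∀ t : Fin n → (Fin m → A), (∀ i, t i ∈ R) → (fun j => f (fun i => t i j)) ∈ R

/-- An `n`-ary operation preserves a binary relation `S`. -/
def PreservesRel {n : ℕ} (f : (Fin n → A) → A) (S : A → A → Prop) : Prop :=
  ∀ u v : Fin n → A, (∀ i, S (u i) (v i)) → S (f u) (f v)

/-- A binary (curried) operation preserves an `m`-ary relation. -/
def Preserves2 {m : ℕ} (f : A → A → A) (R : Set (Fin m → A)) : Prop :=
  ∀ t₁ t₂, t₁ ∈ R → t₂ ∈ R → (fun j => f (t₁ j) (t₂ j)) ∈ R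

/-- A ternary (curried) operation preserves an `m`-ary relation. -/
def Preserves3 {m : ℕ} (f : A → A → A → A) (R : Set (Fin m → A)) : Prop :=
  ∀ t₁ t₂ t₃, t₁ ∈ R → t₂ ∈ R → t₃ ∈ R → (fun j => f (t₁ j) (t₂ j) (t₃ j)) ∈ R

/-- `t` is an `OP`-tuple: `(t[1],t[2]) ∈ O` and `(t[3],t[4]) ∈ P`. -/
def IsOP (O P : A → A → Prop) (t : Fin 4 → A) : Prop := O (t 0) (t 1) ∧ P (t 2) (t 3)

/-- A quaternary relation entails a formula `ψ(x₁,x₂,x₃,x₄)`. -/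
def Entails (R : Set (Fin 4 → A)) (ψ : A → A → A → A → Prop) : Prop :=
  ∀ t ∈ R, ψ (t 0) (t 1) (t 2) (t 3)

/-- `R` efficiently entails `S₁(x₁,x₂) → S₂(x₃,x₄)`. -/
def EffEntails (R : Set (Fin 4 → A)) (S₁ S₂ : A → A → Prop) : Prop :=
  (∀ t ∈ R, S₁ (t 0) (t 1) → S₂ (t 2) (t 3)) ∧
  (∃ t ∈ R, S₁ (t 0) (t 1) ∧ S₂ (t 2) (t 3)) ∧
  (∃ t ∈ R, ¬ S₁ (t 0) (t 1) ∧ ¬ S₂ (t 2) (t 3))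

/-- `f` is a quasi near-unanimity operation. -/
def IsQnu {k : ℕ} (f : (Fin k → A) → A) : Prop :=
  ∀ x y : A, ∀ j : Fin k, f (Function.update (fun _ => x) j y) = f (fun _ => x)

/-- `α` is an automorphism of the graph `(A;E)`. -/
def IsGraphAuto (E : A → A → Prop) (α : A ≃ A) : Prop := ∀ a b, E (α a) (α b) ↔ E a b

/-- `R` is invariant under all automorphisms of `(A;E)`. -/
def AutoInvariant {m : ℕ} (E : A → A → Prop) (R : Set (Fin m → A)) : Prop :=
  ∀ α : A ≃ A, IsGraphAuto E α → ∀ t ∈ R, (fun i => α (t i)) ∈ R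

/-- The extension property of the random graph. -/
def ExtensionProperty (E : A → A → Prop) : Prop :=
  ∀ U U' : Finset A, Disjoint U U' →
    ∃ v : A, (∀ u ∈ U, E v u) ∧ (∀ u ∈ U', ¬ E v u)

/-- A binary operation is injective. -/
def BinInj (f : A → A → A) : Prop := Function.Injective (fun p : A × A => f p.1 p.2)

/-- A ternary operation is injective. -/
def TernInj (f : A → A → A → A) : Prop :=
  Function.Injective (fun p : A × A × A => f p.1 p.2.1 p.2.2)

/-- A binary injection is balanced. -/
def BalancedBin (E : A → A → Prop) (f : A → A → A) : Prop :=
  ∀ a₁ a₂ b₁ b₂ : A,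
    (((E a₁ b₁ ∧ a₂ = b₂) ∨ (a₁ = b₁ ∧ E a₂ b₂)) → E (f a₁ a₂) (f b₁ b₂)) ∧
    (((NRel E a₁ b₁ ∧ a₂ = b₂) ∨ (a₁ = b₁ ∧ NRel E a₂ b₂)) → NRel E (f a₁ a₂) (f b₁ b₂))

/-- A binary operation is `E`-dominated. -/
def EDominated (E : A → A → Prop) (f : A → A → A) : Prop :=
  ∀ a₁ a₂ b₁ b₂ : A, ((a₁ = b₁ ∧ a₂ ≠ b₂) ∨ (a₁ ≠ b₁ ∧ a₂ = b₂)) → E (f a₁ a₂) (f b₁ b₂)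

/-- A binary operation is `N`-dominated. -/
def NDominated (E : A → A → Prop) (f : A → A → A) : Prop :=
  ∀ a₁ a₂ b₁ b₂ : A, ((a₁ = b₁ ∧ a₂ ≠ b₂) ∨ (a₁ ≠ b₁ ∧ a₂ = b₂)) → NRel E (f a₁ a₂) (f b₁ b₂)

/-- A binary operation is of behaviour min. -/
def BehMin (E : A → A → Prop) (f : A → A → A) : Prop :=
  ∀ a₁ a₂ b₁ b₂ : A, a₁ ≠ b₁ → a₂ ≠ b₂ →
    (E (f a₁ a₂) (f b₁ b₂) ↔ (E a₁ b₁ ∧ E a₂ b₂))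

/-- A binary operation is of behaviour max. -/
def BehMax (E : A → A → Prop) (f : A → A → A) : Prop :=
  ∀ a₁ a₂ b₁ b₂ : A, a₁ ≠ b₁ → a₂ ≠ b₂ →
    (NRel E (f a₁ a₂) (f b₁ b₂) ↔ (NRel E a₁ b₁ ∧ NRel E a₂ b₂))

/-- A binary operation is of behaviour projection. -/
def BehProj (E : A → A → Prop) (f : A → A → A) : Prop :=
  (∀ a₁ a₂ b₁ b₂ : A, a₁ ≠ b₁ → a₂ ≠ b₂ → (E (f a₁ a₂) (f b₁ b₂) ↔ E a₁ b₁)) ∨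
  (∀ a₁ a₂ b₁ b₂ : A, a₁ ≠ b₁ → a₂ ≠ b₂ → (E (f a₁ a₂) (f b₁ b₂) ↔ E a₂ b₂))

/-- A binary operation is of behaviour xor. -/
def BehXor (E : A → A → Prop) (f : A → A → A) : Prop :=
  ∀ a₁ a₂ b₁ b₂ : A, a₁ ≠ b₁ → a₂ ≠ b₂ →
    (E (f a₁ a₂) (f b₁ b₂) ↔ Xor' (E a₁ b₁) (E a₂ b₂))

/-- A binary operation is of behaviour xnor. -/
def BehXnor (E : A → A → Prop) (f : A → A → A) : Prop :=
  ∀ a₁ a₂ b₁ b₂ : A, a₁ ≠ b₁ → a₂ ≠ b₂ →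
    (E (f a₁ a₂) (f b₁ b₂) ↔ (E a₁ b₁ ↔ E a₂ b₂))

/-- A binary operation is `E`-constant: its image induces a clique. -/
def EConstantBin (E : A → A → Prop) (f : A → A → A) : Prop :=
  ∀ a₁ a₂ b₁ b₂ : A, f a₁ a₂ ≠ f b₁ b₂ → E (f a₁ a₂) (f b₁ b₂)

/-- A binary operation is `N`-constant: its image induces an independent set. -/
def NConstantBin (E : A → A → Prop) (f : A → A → A) : Prop :=
  ∀ a₁ a₂ b₁ b₂ : A, f a₁ a₂ ≠ f b₁ b₂ → NRel E (f a₁ a₂) (f b₁ b₂)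

/-- A ternary operation is of behaviour majority. -/
def BehMajority (E : A → A → Prop) (f : A → A → A → A) : Prop :=
  ∀ a₁ a₂ a₃ b₁ b₂ b₃ : A, a₁ ≠ b₁ → a₂ ≠ b₂ → a₃ ≠ b₃ →
    (E (f a₁ a₂ a₃) (f b₁ b₂ b₃) ↔
      ((E a₁ b₁ ∧ E a₂ b₂) ∨ (E a₁ b₁ ∧ E a₃ b₃) ∨ (E a₂ b₂ ∧ E a₃ b₃)))

/-- A ternary operation is of behaviour minority. -/
def BehMinority (E : A → A → Prop) (f : A → A → A → A) : Prop :=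
  ∀ a₁ a₂ a₃ b₁ b₂ b₃ : A, a₁ ≠ b₁ → a₂ ≠ b₂ → a₃ ≠ b₃ →
    (NRel E (f a₁ a₂ a₃) (f b₁ b₂ b₃) ↔
      ((NRel E a₁ b₁ ∧ NRel E a₂ b₂ ∧ NRel E a₃ b₃) ∨
       (E a₁ b₁ ∧ E a₂ b₂ ∧ NRel E a₃ b₃) ∨
       (E a₁ b₁ ∧ NRel E a₂ b₂ ∧ E a₃ b₃) ∨
       (NRel E a₁ b₁ ∧ E a₂ b₂ ∧ E a₃ b₃)))

/-- A ternary operation hyperplanely has the binary behaviour `P`. -/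
def Hyperplanely (P : (A → A → A) → Prop) (f : A → A → A → A) : Prop :=
  ∀ c : A, P (fun x y => f x y c) ∧ P (fun x y => f x c y) ∧ P (fun x y => f c x y)

/-- `n_E(u,s)`: the number of coordinates at which `u` and `s` are `E`-related. -/
noncomputable def nECount {k : ℕ} (E : A → A → Prop) (u s : Fin k → A) : ℕ :=
  {i : Fin k | E (u i) (s i)}.ncard

/-- A constant tuple. -/
def IsConstTuple {k : ℕ} (u : Fin k → A) : Prop := ∃ c, ∀ i, u i = c

/-- `h` maps any argument containing an `N`-pair to an `N`-pair and behaves like a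
minority on `{E,=}`. -/
def HMinority (E : A → A → Prop) (h : A → A → A → A) : Prop :=
  (∀ a₁ a₂ a₃ b₁ b₂ b₃ : A,
    (NRel E a₁ b₁ ∨ NRel E a₂ b₂ ∨ NRel E a₃ b₃) →
      NRel E (h a₁ a₂ a₃) (h b₁ b₂ b₃)) ∧
  (∀ a₁ a₂ a₃ b₁ b₂ b₃ : A,
    uu E a₁ b₁ → uu E a₂ b₂ → uu E a₃ b₃ →
      (E (h a₁ a₂ a₃) (h b₁ b₂ b₃) ↔
        ((E a₁ b₁ ∧ E a₂ b₂ ∧ E a₃ b₃) ∨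
         (E a₁ b₁ ∧ ¬ E a₂ b₂ ∧ ¬ E a₃ b₃) ∨
         (¬ E a₁ b₁ ∧ E a₂ b₂ ∧ ¬ E a₃ b₃) ∨
         (¬ E a₁ b₁ ∧ ¬ E a₂ b₂ ∧ E a₃ b₃))))

/-- The vertex set of `C²_ω`, the disjoint union of ω edges. -/
abbrev Vtx : Type := ℕ × Bool

/-- The edge relation of `C²_ω`: `(n,b)` is adjacent to `(m,c)` iff `n = m` and `b ≠ c`. -/
def Ematch (a b : Vtx) : Prop := a.1 = b.1 ∧ a.2 ≠ b.2

/-- `u` and `s` are `{E,=}`-connected: every coordinate pair is in `E ∪ =`. -/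
def EEqConn {k : ℕ} (E : Vtx → Vtx → Prop) (u s : Fin k → Vtx) : Prop :=
  ∀ i, E (u i) (s i) ∨ u i = s i

namespace Stmt10Aux

/-- The unique neighbour of a vertex of `C²_ω`. -/
def flipV (p : Vtx) : Vtx := (p.1, !p.2)

lemma ematch_flip (a : Vtx) : Ematch a (flipV a) :=
  ⟨rfl, by cases h : a.2 <;> simp [flipV, h]⟩

lemma flip_ne (a : Vtx) : flipV a ≠ a := by
  rcases a with ⟨n, b⟩; cases b <;> simp [flipV]

lemma flip_fst (a : Vtx) : (flipV a).1 = a.1 := rfl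

lemma eq_flip_of_ematch {a b : Vtx} (h : Ematch a b) : b = flipV a := by
  rcases a with ⟨n, u⟩; rcases b with ⟨p, v⟩
  obtain ⟨h1, h2⟩ := h
  simp only at h1 h2
  subst h1
  cases u <;> cases v <;> simp_all [flipV]

lemma nrel_iff {a b : Vtx} : NRel Ematch a b ↔ a.1 ≠ b.1 := by
  rcases a with ⟨n, u⟩; rcases b with ⟨p, v⟩
  simp only [NRel, Ematch, Prod.mk.injEq, ne_eq, not_and]
  constructor
  · rintro ⟨h1, h2⟩ h3
    subst h3
    cases u <;> cases v <;> simp_all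
  · intro h
    exact ⟨by simp [h], fun h1 => absurd h1 h⟩

lemma xor_xor (b e : Bool) : xor (xor b e) e = b := by cases b <;> cases e <;> rfl

/-- Automorphisms of `C²_ω` from a permutation of edges and per-edge flips. -/
def mkAuto (π : ℕ ≃ ℕ) (ε : ℕ → Bool) : Vtx ≃ Vtx where
  toFun p := (π p.1, xor p.2 (ε p.1))
  invFun p := (π.symm p.1, xor p.2 (ε (π.symm p.1)))
  left_inv p := by rcases p with ⟨n, b⟩; simp [xor_xor]
  right_inv p := by rcases p with ⟨n, b⟩; simp [xor_xor]

lemma mkAuto_auto (π : ℕ ≃ ℕ) (ε : ℕ → Bool) : IsGraphAuto Ematch (mkAuto π ε) := by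
  rintro ⟨n, u⟩ ⟨p, v⟩
  simp only [Ematch, mkAuto, Equiv.coe_fn_mk, ne_eq]
  constructor
  · rintro ⟨h1, h2⟩
    have hn : n = p := π.injective h1
    subst hn
    exact ⟨rfl, fun h => h2 (by rw [h])⟩
  · rintro ⟨h1, h2⟩
    subst h1
    refine ⟨rfl, fun h => h2 ?_⟩
    have := congrArg (fun b => xor b (ε n)) h
    simpa [xor_xor] using this

lemma exists_auto (a b x y : Vtx) (hab : a.1 ≠ b.1) (hxy : x.1 ≠ y.1) :
    ∃ α : Vtx ≃ Vtx, IsGraphAuto Ematch α ∧ α a = x ∧ α b = y := by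
  classical
  set w := Equiv.swap a.1 x.1 b.1 with hw
  have hwx : w ≠ x.1 := by
    rw [hw, Equiv.swap_apply_def]
    split_ifs with h1 h2
    · exact absurd h1.symm hab
    · intro h; exact hab (h ▸ h2).symm
    · exact h2
  set π : ℕ ≃ ℕ := (Equiv.swap a.1 x.1).trans (Equiv.swap w y.1) with hπ
  have hπa : π a.1 = x.1 := by
    rw [hπ]
    simp only [Equiv.trans_apply, Equiv.swap_apply_left]
    rw [Equiv.swap_apply_of_ne_of_ne (Ne.symm hwx) hxy]
  have hπb : π b.1 = y.1 := by
    rw [hπ]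
    simp only [Equiv.trans_apply]
    rw [show Equiv.swap a.1 x.1 b.1 = w from rfl, Equiv.swap_apply_left]
  set ε : ℕ → Bool := fun n => if n = a.1 then xor a.2 x.2 else if n = b.1 then xor b.2 y.2 else false with hε
  refine ⟨mkAuto π ε, mkAuto_auto π ε, ?_, ?_⟩
  · show (π a.1, xor a.2 (ε a.1)) = x
    have : ε a.1 = xor a.2 x.2 := by simp [hε]
    rw [this, hπa]
    rcases x with ⟨xn, xb⟩
    exact Prod.ext_iff.mpr ⟨rfl, by cases a.2 <;> cases xb <;> rfl⟩
  · show (π b.1, xor b.2 (ε b.1)) = y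
    have : ε b.1 = xor b.2 y.2 := by simp [hε, Ne.symm hab]
    rw [this, hπb]
    rcases y with ⟨yn, yb⟩
    exact Prod.ext_iff.mpr ⟨rfl, by cases b.2 <;> cases yb <;> rfl⟩

lemma F1mem {R : Set (Fin 4 → Vtx)} (hinv : AutoInvariant Ematch R)
    (hEEq : ∃ t ∈ R, IsOP Ematch (fun a b => a = b) t ∧ NRel Ematch (t 1) (t 2)) :
    ∀ x y : Vtx, x.1 ≠ y.1 → (![x, flipV x, y, y] : Fin 4 → Vtx) ∈ R := by
  obtain ⟨t, htR, ⟨hE, hEq⟩, hN⟩ := hEEq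
  intro x y hxy
  have h02 : (t 0).1 ≠ (t 2).1 := by
    rw [hE.1]
    exact nrel_iff.mp hN
  obtain ⟨α, hα, ha, hb⟩ := exists_auto (t 0) (t 2) x y h02 hxy
  have hmem := hinv α hα t htR
  have heq : (fun i => α (t i)) = (![x, flipV x, y, y] : Fin 4 → Vtx) := by
    funext i
    fin_cases i
    · simpa using ha
    · have hE' : Ematch (α (t 0)) (α (t 1)) := (hα _ _).mpr hE
      rw [ha] at hE'
      simpa using eq_flip_of_ematch hE'
    · simpa using hb
    · simpa [← hEq] using hb
  rw [← heq]
  exact hmem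

lemma F2mem {R : Set (Fin 4 → Vtx)} (hinv : AutoInvariant Ematch R)
    (hEqE : ∃ t ∈ R, IsOP (fun a b : Vtx => a = b) Ematch t ∧ NRel Ematch (t 1) (t 2)) :
    ∀ x y : Vtx, x.1 ≠ y.1 → (![x, x, y, flipV y] : Fin 4 → Vtx) ∈ R := by
  obtain ⟨t, htR, ⟨hEq, hE⟩, hN⟩ := hEqE
  intro x y hxy
  have h02 : (t 0).1 ≠ (t 2).1 := by
    rw [hEq]
    exact nrel_iff.mp hN
  obtain ⟨α, hα, ha, hb⟩ := exists_auto (t 0) (t 2) x y h02 hxy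
  have hmem := hinv α hα t htR
  have heq : (fun i => α (t i)) = (![x, x, y, flipV y] : Fin 4 → Vtx) := by
    funext i
    fin_cases i
    · simpa using ha
    · simpa [← hEq] using ha
    · simpa using hb
    · have hE' : Ematch (α (t 2)) (α (t 3)) := (hα _ _).mpr hE
      rw [hb] at hE'
      simpa using eq_flip_of_ematch hE'
  rw [← heq]
  exact hmem

end Stmt10Aux


theorem stmt10 {k : ℕ}
    (f : (Fin k → Vtx) → Vtx) (hqnu : IsQnu f)
    (hfE : PreservesRel f Ematch) (hfN : PreservesRel f (NRel Ematch))
    (hfuuE : PreservesRel f (uu Ematch))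
    (R : Set (Fin 4 → Vtx)) (hRf : Preserves f R)
    (hinv : AutoInvariant Ematch R)
    (hEEq : ∃ t ∈ R, IsOP Ematch (fun a b => a = b) t ∧ NRel Ematch (t 1) (t 2))
    (hEqE : ∃ t' ∈ R, IsOP (fun a b => a = b) Ematch t' ∧ NRel Ematch (t' 1) (t' 2))
    (m : ℕ) (hm1 : 1 ≤ m) (hmk : m ≤ k) :
    ((∀ u s : Fin k → Vtx, EEqConn Ematch u s → IsConstTuple u →
        nECount Ematch u s = m → Ematch (f u) (f s)) →
      ((∀ u s : Fin k → Vtx, EEqConn Ematch u s → IsConstTuple u →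
          (nECount Ematch u s = k - m ∨ nECount Ematch u s = k - m + 1) →
          f u = f s) ∨
       (∃ t ∈ R, IsOP Ematch Ematch t))) ∧
    ((∀ u s : Fin k → Vtx, EEqConn Ematch u s → IsConstTuple u →
        nECount Ematch u s = m → f u = f s) →
      ((∀ u s : Fin k → Vtx, EEqConn Ematch u s → IsConstTuple u →
          (nECount Ematch u s = k - m ∨ nECount Ematch u s = k - m + 1) →
          Ematch (f u) (f s)) ∨
       (∃ t ∈ R, IsOP (fun a b : Vtx => a = b) (fun a b : Vtx => a = b) t))) := by
  
  classical
  open Stmt10Aux in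
  have hF1 := Stmt10Aux.F1mem hinv hEEq
  have hF2 := Stmt10Aux.F2mem hinv hEqE
  set σ := Stmt10Aux.flipV with hσ
  -- connectivity of a standard pair
  have hconn : ∀ (x : Vtx) (S : Finset (Fin k)),
      EEqConn Ematch (fun _ => x) (fun i => if i ∈ S then σ x else x) := by
    intro x S i
    by_cases h : i ∈ S
    · simp only [h, if_true]
      exact Or.inl (Stmt10Aux.ematch_flip x)
    · right
      simp [h]
  -- edge count of a standard pair
  have hcount : ∀ (x : Vtx) (S : Finset (Fin k)),
      nECount Ematch (fun _ => x) (fun i => if i ∈ S then σ x else x) = S.card := by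
    intro x S
    have hset : {i : Fin k | Ematch x (if i ∈ S then σ x else x)} = ↑S := by
      ext i
      simp only [Set.mem_setOf_eq, Finset.coe_sort_coe, Finset.mem_coe]
      by_cases h : i ∈ S
      · simp only [h, if_true, iff_true]
        exact Stmt10Aux.ematch_flip x
      · simp [h, Ematch]
    show {i : Fin k | Ematch ((fun _ => x) i) _}.ncard = S.card
    rw [show {i : Fin k | Ematch ((fun (_ : Fin k) => x) i) ((fun i => if i ∈ S then σ x else x) i)} = {i : Fin k | Ematch x (if i ∈ S then σ x else x)} from rfl, hset, Set.ncard_coe_finset]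
  -- decomposition of a connected pair with constant first component
  have decomp : ∀ u s : Fin k → Vtx, EEqConn Ematch u s → IsConstTuple u →
      ∃ (y : Vtx) (T : Finset (Fin k)), u = (fun _ => y) ∧
        s = (fun i => if i ∈ T then σ y else y) ∧ nECount Ematch u s = T.card := by
    rintro u s hcn ⟨y, hy⟩
    refine ⟨y, Finset.univ.filter (fun i => s i ≠ y), funext hy, ?_, ?_⟩
    · funext i
      simp only [Finset.mem_filter, Finset.mem_univ, true_and, ne_eq, ite_not]
      by_cases h : s i = y
      · simp [h]
      · simp only [h, if_false]
        rcases hcn i with hE | hEq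
        · rw [hy i] at hE
          exact eq_flip_of_ematch hE
        · exact absurd ((hy i) ▸ hEq.symm) h
    · have hset : {i : Fin k | Ematch (u i) (s i)} =
          ↑(Finset.univ.filter (fun i => s i ≠ y)) := by
        ext i
        simp only [Set.mem_setOf_eq, Finset.coe_filter, Finset.mem_univ, true_and,
          Set.mem_setOf_eq, ne_eq]
        constructor
        · intro hE
          rw [hy i] at hE
          rw [eq_flip_of_ematch hE]
          intro hc
          exact Stmt10Aux.flip_ne y hc
        · intro h
          rcases hcn i with hE | hEq
          · exact hE
          · exact absurd ((hy i) ▸ hEq.symm) h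
      show {i : Fin k | Ematch (u i) (s i)}.ncard = _
      rw [hset, Set.ncard_coe_finset]
  -- the key construction
  have key : ∀ (x y : Vtx), x.1 ≠ y.1 → ∀ T : Finset (Fin k),
      (T.card = k - m ∨ T.card = k - m + 1) →
      ∃ S : Finset (Fin k), S.card = m ∧ ∃ r ∈ R,
        r 0 = f (fun _ => x) ∧ r 1 = f (fun i => if i ∈ S then σ x else x) ∧
        r 2 = f (fun _ => y) ∧ r 3 = f (fun i => if i ∈ T then σ y else y) := by
    intro x y hxy T hT
    have hxy' : x.1 ≠ (σ y).1 := by rwa [hσ, Stmt10Aux.flip_fst]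
    rcases hT with h | h
    · refine ⟨Tᶜ, by rw [Finset.card_compl, h, Fintype.card_fin]; omega, ?_⟩
      set t : Fin k → Fin 4 → Vtx :=
        fun i => if i ∈ T then ![x, x, y, σ y] else ![x, σ x, y, y] with ht
      have hmem := hRf t (fun i => by
        by_cases hi : i ∈ T
        · simpa [ht, hi] using hF2 x y hxy
        · simpa [ht, hi] using hF1 x y hxy)
      refine ⟨_, hmem, ?_, ?_, ?_, ?_⟩
      · exact congrArg f (funext fun i => by by_cases hi : i ∈ T <;> simp [ht, hi])
      · exact congrArg f (funext fun i => by
          by_cases hi : i ∈ T <;> simp [ht, hi, Finset.mem_compl])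
      · exact congrArg f (funext fun i => by by_cases hi : i ∈ T <;> simp [ht, hi])
      · exact congrArg f (funext fun i => by by_cases hi : i ∈ T <;> simp [ht, hi])
    · have hT0 : T.Nonempty := Finset.card_pos.mp (by omega)
      obtain ⟨i₀, hi₀⟩ := hT0
      have hi₀c : i₀ ∉ Tᶜ := by simp [hi₀]
      refine ⟨insert i₀ Tᶜ, by
        rw [Finset.card_insert_of_notMem hi₀c, Finset.card_compl, h, Fintype.card_fin]
        omega, ?_⟩
      set t : Fin k → Fin 4 → Vtx :=
        fun i => if i = i₀ then ![x, σ x, σ y, σ y]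
          else if i ∈ T then ![x, x, y, σ y] else ![x, σ x, y, y] with ht
      have hmem := hRf t (fun i => by
        by_cases hi0 : i = i₀
        · simpa [ht, hi0] using hF1 x (σ y) hxy'
        · by_cases hi : i ∈ T
          · simpa [ht, hi0, hi] using hF2 x y hxy
          · simpa [ht, hi0, hi] using hF1 x y hxy)
      refine ⟨_, hmem, ?_, ?_, ?_, ?_⟩
      · exact congrArg f (funext fun i => by
          by_cases hi0 : i = i₀
          · simp [ht, hi0]
          · by_cases hi : i ∈ T <;> simp [ht, hi0, hi])
      · exact congrArg f (funext fun i => by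
          by_cases hi0 : i = i₀
          · simp [ht, hi0]
          · by_cases hi : i ∈ T <;>
              simp [ht, hi0, hi, Finset.mem_insert, Finset.mem_compl])
      · show f (fun i => t i 2) = f (fun _ => y)
        have : (fun i => t i 2) = Function.update (fun _ => y) i₀ (σ y) := by
          funext i
          rw [Function.update_apply]
          by_cases hi0 : i = i₀
          · simp [ht, hi0]
          · by_cases hi : i ∈ T <;> simp [ht, hi0, hi]
        rw [this]
        exact hqnu y (σ y) i₀
      · exact congrArg f (funext fun i => by
          by_cases hi0 : i = i₀
          · simp [ht, hi0, hi₀]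
          · by_cases hi : i ∈ T <;> simp [ht, hi0, hi])
  constructor
  -- Part 1
  · intro hyp
    by_cases halt : ∀ u s : Fin k → Vtx, EEqConn Ematch u s → IsConstTuple u →
        (nECount Ematch u s = k - m ∨ nECount Ematch u s = k - m + 1) → f u = f s
    · exact Or.inl halt
    · right
      push_neg at halt
      obtain ⟨u, s, hcn, hct, hcard, hne⟩ := halt
      obtain ⟨y, T, huy, hsT, hnc⟩ := decomp u s hcn hct
      have hE2 : Ematch (f u) (f s) :=
        (hfuuE u s (fun i => (hcn i).elim Or.inl Or.inr)).resolve_right hne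
      have hxy : ((y.1 + 1, false) : Vtx).1 ≠ y.1 := by simp
      obtain ⟨S, hScard, r, hrR, hr0, hr1, hr2, hr3⟩ :=
        key (y.1 + 1, false) y hxy T (by rw [← hnc]; exact hcard)
      refine ⟨r, hrR, ?_, ?_⟩
      · rw [hr0, hr1]
        exact hyp _ _ (hconn _ S) ⟨_, fun _ => rfl⟩ (by rw [hcount]; exact hScard)
      · rw [hr2, hr3, ← huy, ← hsT]
        exact hE2
  -- Part 2
  · intro hyp
    by_cases halt : ∀ u s : Fin k → Vtx, EEqConn Ematch u s → IsConstTuple u →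
        (nECount Ematch u s = k - m ∨ nECount Ematch u s = k - m + 1) →
        Ematch (f u) (f s)
    · exact Or.inl halt
    · right
      push_neg at halt
      obtain ⟨u, s, hcn, hct, hcard, hnE⟩ := halt
      obtain ⟨y, T, huy, hsT, hnc⟩ := decomp u s hcn hct
      have hE2 : f u = f s :=
        (hfuuE u s (fun i => (hcn i).elim Or.inl Or.inr)).resolve_left hnE
      have hxy : ((y.1 + 1, false) : Vtx).1 ≠ y.1 := by simp
      obtain ⟨S, hScard, r, hrR, hr0, hr1, hr2, hr3⟩ :=
        key (y.1 + 1, false) y hxy T (by rw [← hnc]; exact hcard)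
      refine ⟨r, hrR, ?_, ?_⟩
      · rw [hr0, hr1]
        exact hyp _ _ (hconn _ S) ⟨_, fun _ => rfl⟩ (by rw [hcount]; exact hScard)
      · rw [hr2, hr3, ← huy, ← hsT]
        exact hE2
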